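/- Let T : U → GL_r(C) be a holomorphic matrix function on a simply connected open set U ⊆ Cʳ, and suppose the 1-form θ := T^{-1}dT (with blocks θᵢ = T^{-1}∂ᵢT) satisfies the symmetry (θᵢ)_{kj} = (θⱼ)_{ki} for all 1 ≤ i,j,k ≤ r. Then the vector fields ∂̂ᵢ := Σⱼ (T^{-1})_{jᵢ} ∂ⱼ commute pairwise: [∂̂ᵢ, ∂̂ⱼ] = 0 for all i,j. -/

import Mathlib

/-- Partial derivative of a matrix-valued function of t, taken entrywise. -/
noncomputable def pdm {r : ℕ} (F : (Fin r → ℂ) → Matrix (Fin r) (Fin r) ℂ)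
    (i : Fin r) (t : Fin r → ℂ) : Matrix (Fin r) (Fin r) ℂ :=
  Matrix.of fun k l => fderiv ℂ (fun x => F x k l) t (Pi.single i 1)

/-- det of an entrywise differentiable matrix function is differentiable. -/
theorem stmt9_diffAt_det {r : ℕ} {M : (Fin r → ℂ) → Matrix (Fin r) (Fin r) ℂ} {t : Fin r → ℂ}
    (h : ∀ k l, DifferentiableAt ℂ (fun x => M x k l) t) :
    DifferentiableAt ℂ (fun x => (M x).det) t := by
  simp only [Matrix.det_apply']
  apply DifferentiableAt.fun_sum
  intro σ _
  exact DifferentiableAt.const_mul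
    ((HasFDerivAt.finset_prod (fun i _ => (h (σ i) i).hasFDerivAt)).differentiableAt) _

/-- Entries of the inverse matrix are differentiable where `T` is invertible. -/
theorem stmt9_diffAt_inv {r : ℕ} {U : Set (Fin r → ℂ)} (hU : IsOpen U)
    {T : (Fin r → ℂ) → Matrix (Fin r) (Fin r) ℂ}
    (hT : ∀ k l, DifferentiableOn ℂ (fun t => T t k l) U)
    (hTu : ∀ t ∈ U, IsUnit (T t)) {t : Fin r → ℂ} (ht : t ∈ U) (k l : Fin r) :
    DifferentiableAt ℂ (fun x => (T x)⁻¹ k l) t := by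
  have hTd : ∀ k l, DifferentiableAt ℂ (fun x => T x k l) t :=
    fun k l => (hT k l).differentiableAt (hU.mem_nhds ht)
  have hdet : DifferentiableAt ℂ (fun x => (T x).det) t := stmt9_diffAt_det hTd
  have hdet0 : (T t).det ≠ 0 := by
    have := (Matrix.isUnit_iff_isUnit_det _).mp (hTu t ht)
    exact this.ne_zero
  have hadj : DifferentiableAt ℂ (fun x => (T x).adjugate k l) t := by
    simp only [Matrix.adjugate_apply]
    apply stmt9_diffAt_det
    intro a b
    by_cases hab : a = l
    · simp [Matrix.updateRow_apply, hab]
    · simpa [Matrix.updateRow_apply, hab] using hTd a b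
  have heq : (fun x => (T x)⁻¹ k l) = fun x => ((T x).det)⁻¹ * (T x).adjugate k l := by
    funext x
    rw [Matrix.inv_def]
    simp [Ring.inverse_eq_inv', smul_eq_mul]
  rw [heq]
  exact (hdet.inv hdet0).mul hadj

/-- Directional product rule for scalar-valued functions. -/
theorem stmt9_fderiv_mul_apply {E : Type*} [NormedAddCommGroup E] [NormedSpace ℂ E]
    {u v : E → ℂ} {t : E} (hu : DifferentiableAt ℂ u t) (hv : DifferentiableAt ℂ v t) (w : E) :
    fderiv ℂ (fun x => u x * v x) t w
      = fderiv ℂ u t w * v t + u t * fderiv ℂ v t w := by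
  rw [fderiv_fun_mul hu hv]
  simp only [ContinuousLinearMap.add_apply, ContinuousLinearMap.coe_smul', Pi.smul_apply,
    smul_eq_mul]
  ring

/-- Directional sum rule. -/
theorem stmt9_fderiv_sum_apply {E ι : Type*} [NormedAddCommGroup E] [NormedSpace ℂ E]
    {s : Finset ι} {A : ι → E → ℂ} {t : E}
    (h : ∀ i ∈ s, DifferentiableAt ℂ (A i) t) (w : E) :
    fderiv ℂ (fun x => ∑ i ∈ s, A i x) t w = ∑ i ∈ s, fderiv ℂ (A i) t w := by
  rw [fderiv_fun_sum h]
  simp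

/-- Derivative of the inverse: `∂ₐ(T⁻¹) = -T⁻¹ (∂ₐT) T⁻¹`. -/
theorem stmt9_pdm_inv {r : ℕ} {U : Set (Fin r → ℂ)} (hU : IsOpen U)
    {T : (Fin r → ℂ) → Matrix (Fin r) (Fin r) ℂ}
    (hT : ∀ k l, DifferentiableOn ℂ (fun t => T t k l) U)
    (hTu : ∀ t ∈ U, IsUnit (T t)) {t : Fin r → ℂ} (ht : t ∈ U) (a : Fin r) :
    pdm (fun x => (T x)⁻¹) a t = -((T t)⁻¹ * pdm T a t * (T t)⁻¹) := by
  have hTd : ∀ k l, DifferentiableAt ℂ (fun x => T x k l) t :=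
    fun k l => (hT k l).differentiableAt (hU.mem_nhds ht)
  have hSd : ∀ k l, DifferentiableAt ℂ (fun x => (T x)⁻¹ k l) t :=
    fun k l => stmt9_diffAt_inv hU hT hTu ht k l
  have hdetu : IsUnit (T t).det := (Matrix.isUnit_iff_isUnit_det _).mp (hTu t ht)
  have key : pdm T a t * (T t)⁻¹ + T t * pdm (fun x => (T x)⁻¹) a t = 0 := by
    ext k l
    have hconst : fderiv ℂ (fun x => ∑ c, T x k c * (T x)⁻¹ c l) t = 0 := by
      have hev : (fun x => ∑ c, T x k c * (T x)⁻¹ c l)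
          =ᶠ[nhds t] fun _ => (1 : Matrix (Fin r) (Fin r) ℂ) k l := by
        filter_upwards [hU.mem_nhds ht] with x hx
        rw [← Matrix.mul_apply,
          Matrix.mul_nonsing_inv _ ((Matrix.isUnit_iff_isUnit_det _).mp (hTu x hx))]
      rw [hev.fderiv_eq, fderiv_fun_const]
      rfl
    have hsum : fderiv ℂ (fun x => ∑ c, T x k c * (T x)⁻¹ c l) t (Pi.single a 1)
        = ∑ c, (fderiv ℂ (fun x => T x k c) t (Pi.single a 1) * (T t)⁻¹ c l
            + T t k c * fderiv ℂ (fun x => (T x)⁻¹ c l) t (Pi.single a 1)) := by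
      rw [stmt9_fderiv_sum_apply (fun c _ => (hTd k c).fun_mul (hSd c l))]
      exact Finset.sum_congr rfl fun c _ => stmt9_fderiv_mul_apply (hTd k c) (hSd c l) _
    have h0 : (∑ c, (fderiv ℂ (fun x => T x k c) t (Pi.single a 1) * (T t)⁻¹ c l
            + T t k c * fderiv ℂ (fun x => (T x)⁻¹ c l) t (Pi.single a 1))) = 0 := by
      rw [← hsum, hconst]; rfl
    simpa [Matrix.add_apply, Matrix.mul_apply, pdm, Matrix.zero_apply,
      Finset.sum_add_distrib] using h0
  have h1 : T t * pdm (fun x => (T x)⁻¹) a t = -(pdm T a t * (T t)⁻¹) :=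
    eq_neg_of_add_eq_zero_left (by rw [add_comm] at key; exact key)
  calc pdm (fun x => (T x)⁻¹) a t
      = ((T t)⁻¹ * T t) * pdm (fun x => (T x)⁻¹) a t := by
        rw [Matrix.nonsing_inv_mul _ hdetu, Matrix.one_mul]
    _ = (T t)⁻¹ * (T t * pdm (fun x => (T x)⁻¹) a t) := by rw [Matrix.mul_assoc]
    _ = (T t)⁻¹ * -(pdm T a t * (T t)⁻¹) := by rw [h1]
    _ = -((T t)⁻¹ * pdm T a t * (T t)⁻¹) := by
        rw [Matrix.mul_neg, Matrix.mul_assoc]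

/-- The purely algebraic symmetry computation. -/
theorem stmt9_algebra_key {r : ℕ} (St : Matrix (Fin r) (Fin r) ℂ)
    (θ : Fin r → Matrix (Fin r) (Fin r) ℂ)
    (Df : Fin r → ℂ) (H : Fin r → Fin r → ℂ)
    (hH : ∀ a b, H a b = H b a)
    (hθ : ∀ a c b, θ a b c = θ c b a) (i j : Fin r) :
    ∑ a, St a i * ∑ b, ((-(θ a * St)) b j * Df b + St b j * H a b)
      = ∑ a, St a j * ∑ b, ((-(θ a * St)) b i * Df b + St b i * H a b) := by
  have key1 : ∀ b i j, (∑ a, St a i * (θ a * St) b j) = ∑ a, St a j * (θ a * St) b i := by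
    intro b i j
    simp only [Matrix.mul_apply, Finset.mul_sum]
    rw [Finset.sum_comm]
    refine Finset.sum_congr rfl fun x _ => Finset.sum_congr rfl fun y _ => ?_
    rw [hθ y x b]
    ring
  simp only [mul_add, Finset.mul_sum, Finset.sum_add_distrib]
  congr 1
  · -- first-derivative part
    simp only [Matrix.neg_apply, neg_mul, mul_neg, Finset.sum_neg_distrib, neg_inj]
    rw [Finset.sum_comm]
    conv_rhs => rw [Finset.sum_comm]
    refine Finset.sum_congr rfl fun b _ => ?_
    have h : ∀ i j, ∑ a, St a i * ((θ a * St) b j * Df b)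
        = (∑ a, St a i * (θ a * St) b j) * Df b := by
      intro i j
      rw [Finset.sum_mul]
      exact Finset.sum_congr rfl fun a _ => by ring
    rw [h i j, h j i, key1 b i j]
  · -- second-derivative part
    rw [Finset.sum_comm]
    refine Finset.sum_congr rfl fun x _ => Finset.sum_congr rfl fun y _ => ?_
    rw [hH y x]
    ring

/-- key step of Proposition 5.2: if θ = T⁻¹dT satisfies the symmetry
(θᵢ)_{kj} = (θⱼ)_{ki}, then the vector fields ∂̂ᵢ = Σⱼ (T⁻¹)_{jᵢ}∂ⱼ commute pairwise
(as operators on twice continuously differentiable functions). -/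
theorem stmt9 {r : ℕ} (U : Set (Fin r → ℂ)) (hU : IsOpen U)
    (T : (Fin r → ℂ) → Matrix (Fin r) (Fin r) ℂ)
    (hT : ∀ k l, DifferentiableOn ℂ (fun t => T t k l) U)
    (hTu : ∀ t ∈ U, IsUnit (T t))
    (hsym : ∀ t ∈ U, ∀ i j k,
      ((T t)⁻¹ * pdm T i t) k j = ((T t)⁻¹ * pdm T j t) k i) :
    ∀ (f : (Fin r → ℂ) → ℂ), ContDiff ℂ 2 f → ∀ t ∈ U, ∀ i j,
      (∑ a, ((T t)⁻¹) a i *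
        fderiv ℂ (fun x => ∑ b, ((T x)⁻¹) b j * fderiv ℂ f x (Pi.single b 1))
          t (Pi.single a 1))
      = (∑ a, ((T t)⁻¹) a j *
        fderiv ℂ (fun x => ∑ b, ((T x)⁻¹) b i * fderiv ℂ f x (Pi.single b 1))
          t (Pi.single a 1)) := by
  intro f hf t ht i j
  have hSd : ∀ k l, DifferentiableAt ℂ (fun x => (T x)⁻¹ k l) t :=
    fun k l => stmt9_diffAt_inv hU hT hTu ht k l
  have hf1 : ContDiff ℂ 1 (fderiv ℂ f) := hf.fderiv_right (by norm_num)
  have hDfd : ∀ b : Fin r, DifferentiableAt ℂ (fun x => fderiv ℂ f x (Pi.single b 1)) t :=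
    fun b => ((hf1.clm_apply contDiff_const).differentiable one_ne_zero).differentiableAt
  -- the derivative of the inner sum, evaluated in a coordinate direction
  have hgderiv : ∀ (jj aa : Fin r),
      fderiv ℂ (fun x => ∑ b, (T x)⁻¹ b jj * fderiv ℂ f x (Pi.single b 1)) t (Pi.single aa 1)
      = ∑ b, (pdm (fun x => (T x)⁻¹) aa t b jj * fderiv ℂ f t (Pi.single b 1)
          + (T t)⁻¹ b jj * fderiv ℂ (fun x => fderiv ℂ f x (Pi.single b 1)) t
              (Pi.single aa 1)) := by
    intro jj aa
    rw [stmt9_fderiv_sum_apply (fun b _ => (hSd b jj).fun_mul (hDfd b))]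
    refine Finset.sum_congr rfl fun b _ => ?_
    rw [stmt9_fderiv_mul_apply (hSd b jj) (hDfd b)]
    rfl
  -- symmetry of second derivatives
  have hHsymm : ∀ a b : Fin r,
      fderiv ℂ (fun x => fderiv ℂ f x (Pi.single b 1)) t (Pi.single a 1)
      = fderiv ℂ (fun x => fderiv ℂ f x (Pi.single a 1)) t (Pi.single b 1) := by
    have hclm : ∀ v w : Fin r → ℂ,
        fderiv ℂ (fun x => fderiv ℂ f x v) t w = fderiv ℂ (fderiv ℂ f) t w v := by
      intro v w
      rw [fderiv_clm_apply ((hf1.differentiable one_ne_zero).differentiableAt)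
        (differentiableAt_const v)]
      simp
    intro a b
    rw [hclm, hclm]
    exact (hf.contDiffAt.isSymmSndFDerivAt (by norm_num)) (Pi.single a 1) (Pi.single b 1)
  simp only [hgderiv]
  -- rewrite the derivative of the inverse
  have hpdm : ∀ a : Fin r, pdm (fun x => (T x)⁻¹) a t
      = -(((T t)⁻¹ * pdm T a t) * (T t)⁻¹) := by
    intro a
    rw [stmt9_pdm_inv hU hT hTu ht a]
  simp only [hpdm]
  exact stmt9_algebra_key ((T t)⁻¹) (fun a => (T t)⁻¹ * pdm T a t)
    (fun b => fderiv ℂ f t (Pi.single b 1))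
    (fun a b => fderiv ℂ (fun x => fderiv ℂ f x (Pi.single b 1)) t (Pi.single a 1))
    (fun a b => hHsymm a b) (fun a c b => hsym t ht a c b) i j
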